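/- Excess error Ψ-bound for all measurable functions: Let H_all be the set of all measurable functions X→ℝ and Φ:ℝ→[0,∞) a margin-based loss. Assume there exists a convex function Ψ:[0,∞)→ℝ with Ψ(0)=0 such that for every x∈X, Ψ(2|η(x)−1/2|) ≤ inf{ΔC_{ℓ_Φ,H_all}(h,x) : h∈H_all, sign(h(x))·(η(x)−1/2) ≤ 0}. Then for every measurable h:X→ℝ, Ψ(R_{ℓ_{0-1}}(h) − R*_{ℓ_{0-1},H_all}) ≤ R_{ℓ_Φ}(h) − R*_{ℓ_Φ,H_all}. -/
import Mathlib


open MeasureTheory Set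

noncomputable section

/-- Conditional `ℓ`-risk of `h` at `x` with conditional probability level `t`. -/
def condRiskT {X : Type*} (ℓ : (X → ℝ) → X → ℝ → ℝ) (h : X → ℝ) (x : X) (t : ℝ) : ℝ :=
  t * ℓ h x 1 + (1 - t) * ℓ h x (-1)

/-- Conditional `ℓ`-risk of `h` at `x`. -/
def condRisk {X : Type*} (ℓ : (X → ℝ) → X → ℝ → ℝ) (η : X → ℝ) (h : X → ℝ) (x : X) : ℝ :=
  condRiskT ℓ h x (η x)

/-- Minimal conditional `ℓ`-risk over the hypothesis set `H` at `x`. -/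
def condRiskStar {X : Type*} (ℓ : (X → ℝ) → X → ℝ → ℝ) (η : X → ℝ) (H : Set (X → ℝ))
    (x : X) : ℝ :=
  sInf ((fun h => condRisk ℓ η h x) '' H)

/-- `ΔC_{ℓ,H}(h,x)`. -/
def deltaC {X : Type*} (ℓ : (X → ℝ) → X → ℝ → ℝ) (η : X → ℝ) (H : Set (X → ℝ))
    (h : X → ℝ) (x : X) : ℝ :=
  condRisk ℓ η h x - condRiskStar ℓ η H x

/-- `ΔC_{ℓ,H}(h,x,t)`. -/
def deltaCT {X : Type*} (ℓ : (X → ℝ) → X → ℝ → ℝ) (H : Set (X → ℝ))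
    (h : X → ℝ) (x : X) (t : ℝ) : ℝ :=
  condRiskT ℓ h x t - sInf ((fun h' => condRiskT ℓ h' x t) '' H)

/-- Generalization error `R_ℓ(h)`. -/
def genErr {X : Type*} [MeasurableSpace X] (μ : Measure X)
    (ℓ : (X → ℝ) → X → ℝ → ℝ) (η : X → ℝ) (h : X → ℝ) : ℝ :=
  ∫ x, condRisk ℓ η h x ∂μ

/-- Best-in-class error `R*_{ℓ,H}`. -/
def bestErr {X : Type*} [MeasurableSpace X] (μ : Measure X)
    (ℓ : (X → ℝ) → X → ℝ → ℝ) (η : X → ℝ) (H : Set (X → ℝ)) : ℝ :=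
  sInf ((fun h => genErr μ ℓ η h) '' H)

/-- Minimizability gap `M_{ℓ,H}`. -/
def minGap {X : Type*} [MeasurableSpace X] (μ : Measure X)
    (ℓ : (X → ℝ) → X → ℝ → ℝ) (η : X → ℝ) (H : Set (X → ℝ)) : ℝ :=
  bestErr μ ℓ η H - ∫ x, condRiskStar ℓ η H x ∂μ

/-- `ε`-truncation `⟨t⟩_ε = t · 1_{t > ε}`. -/
def trunc (ε t : ℝ) : ℝ := if ε < t then t else 0

/-- sign function: `+1` if `α ≥ 0`, `−1` otherwise. -/
def sgn (a : ℝ) : ℝ := if 0 ≤ a then 1 else -1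

/-- The zero-one loss `ℓ_{0-1}(h,x,y) = 1_{sign(h(x)) ≠ y}`. -/
def loss01 {X : Type*} (h : X → ℝ) (x : X) (y : ℝ) : ℝ :=
  if sgn (h x) ≠ y then 1 else 0

/-- Margin-based loss `ℓ_Φ(h,x,y) = Φ(y h(x))`. -/
def marginLoss {X : Type*} (Φ : ℝ → ℝ) (h : X → ℝ) (x : X) (y : ℝ) : ℝ :=
  Φ (y * h x)

end



open MeasureTheory Set Filter Topology

namespace PsiBoundAux

noncomputable def Faff (Φ : ℝ → ℝ) (t α : ℝ) : ℝ := t * Φ α + (1 - t) * Φ (-α)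

noncomputable def phiInf (Φ : ℝ → ℝ) (t : ℝ) : ℝ := sInf (Set.range (Faff Φ t))

lemma Faff_nonneg {Φ : ℝ → ℝ} (hΦ : ∀ s, 0 ≤ Φ s) {t : ℝ} (ht : t ∈ Set.Icc (0:ℝ) 1)
    (α : ℝ) : 0 ≤ Faff Φ t α := by
  have h1 := ht.1; have h2 := ht.2
  have ha := mul_nonneg h1 (hΦ α)
  have hb := mul_nonneg (by linarith : (0:ℝ) ≤ 1 - t) (hΦ (-α))
  unfold Faff; linarith

lemma Faff_bddBelow {Φ : ℝ → ℝ} (hΦ : ∀ s, 0 ≤ Φ s) {t : ℝ} (ht : t ∈ Set.Icc (0:ℝ) 1) :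
    BddBelow (Set.range (Faff Φ t)) := by
  refine ⟨0, ?_⟩
  rintro y ⟨α, rfl⟩
  exact Faff_nonneg hΦ ht α

lemma phiInf_le {Φ : ℝ → ℝ} (hΦ : ∀ s, 0 ≤ Φ s) {t : ℝ} (ht : t ∈ Set.Icc (0:ℝ) 1)
    (α : ℝ) : phiInf Φ t ≤ Faff Φ t α :=
  csInf_le (Faff_bddBelow hΦ ht) (Set.mem_range_self α)

lemma phiInf_nonneg {Φ : ℝ → ℝ} (hΦ : ∀ s, 0 ≤ Φ s) {t : ℝ} (ht : t ∈ Set.Icc (0:ℝ) 1) :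
    0 ≤ phiInf Φ t :=
  le_csInf ⟨Faff Φ t 0, Set.mem_range_self 0⟩ (by rintro y ⟨α, rfl⟩; exact Faff_nonneg hΦ ht α)

lemma Faff_zero (Φ : ℝ → ℝ) (t : ℝ) : Faff Φ t 0 = Φ 0 := by
  unfold Faff; rw [neg_zero]; ring

lemma phiInf_le_top {Φ : ℝ → ℝ} (hΦ : ∀ s, 0 ≤ Φ s) {t : ℝ} (ht : t ∈ Set.Icc (0:ℝ) 1) :
    phiInf Φ t ≤ Φ 0 := by
  have := phiInf_le hΦ ht 0
  rwa [Faff_zero] at this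

lemma Faff_shift (Φ : ℝ → ℝ) (t q α : ℝ) :
    Faff Φ t α = Faff Φ q α + (t - q) * (Φ α - Φ (-α)) := by
  unfold Faff; ring

lemma exists_countable_approx (Φ : ℝ → ℝ) (hΦ : ∀ s, 0 ≤ Φ s) :
    ∃ A : ℕ → ℝ, ∀ t ∈ Set.Icc (0:ℝ) 1, ∀ ε > 0, ∃ n, Faff Φ t (A n) < phiInf Φ t + ε := by
  classical
  -- choice of near minimizers at rational points
  have hpick : ∀ p : ℚ × ℕ, ∃ α : ℝ, ((p.1:ℝ) ∈ Set.Icc (0:ℝ) 1 →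
      Faff Φ (p.1:ℝ) α < phiInf Φ (p.1:ℝ) + 1/(p.2+1)) := by
    rintro ⟨q, k⟩
    by_cases hq : (q:ℝ) ∈ Set.Icc (0:ℝ) 1
    · have hpos : (0:ℝ) < 1/(k+1) := by positivity
      have hlt : phiInf Φ (q:ℝ) < phiInf Φ (q:ℝ) + 1/(k+1) := by linarith
      obtain ⟨y, hy, hylt⟩ := exists_lt_of_csInf_lt ⟨Faff Φ (q:ℝ) 0, Set.mem_range_self 0⟩ hlt
      obtain ⟨α, rfl⟩ := hy
      exact ⟨α, fun _ => hylt⟩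
    · exact ⟨0, fun h => absurd h hq⟩
  choose pick hpick using hpick
  let e : ℚ × ℕ ≃ ℕ := Denumerable.eqv (ℚ × ℕ)
  refine ⟨fun n => pick (e.symm n), ?_⟩
  intro t ht ε hε
  -- helper to produce an index
  have key : ∀ q : ℚ, ∀ k : ℕ, ∃ n, pick (e.symm n) = pick (q, k) := by
    intro q k
    exact ⟨e (q, k), by rw [Equiv.symm_apply_apply]⟩
  by_cases ht0 : t = 0
  · obtain ⟨k, hk⟩ := exists_nat_one_div_lt hε
    obtain ⟨n, hn⟩ := key 0 k
    refine ⟨n, ?_⟩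
    show Faff Φ t (pick (e.symm n)) < phiInf Φ t + ε
    rw [hn]
    have h01 : ((0:ℚ):ℝ) ∈ Set.Icc (0:ℝ) 1 := by norm_num
    have := hpick (0, k) h01
    simp only [Rat.cast_zero] at this
    subst ht0
    calc Faff Φ 0 (pick (0, k)) < phiInf Φ 0 + 1/(k+1) := this
      _ ≤ phiInf Φ 0 + ε := by push_cast at hk ⊢; linarith
  by_cases ht1 : t = 1
  · obtain ⟨k, hk⟩ := exists_nat_one_div_lt hε
    obtain ⟨n, hn⟩ := key 1 k
    refine ⟨n, ?_⟩
    show Faff Φ t (pick (e.symm n)) < phiInf Φ t + ε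
    rw [hn]
    have h01 : ((1:ℚ):ℝ) ∈ Set.Icc (0:ℝ) 1 := by norm_num
    have := hpick (1, k) h01
    simp only [Rat.cast_one] at this
    subst ht1
    calc Faff Φ 1 (pick (1, k)) < phiInf Φ 1 + 1/(k+1) := this
      _ ≤ phiInf Φ 1 + ε := by push_cast at hk ⊢; linarith
  -- interior case
  have htIoo : t ∈ Set.Ioo (0:ℝ) 1 := by
    rcases ht with ⟨h0, h1⟩
    exact ⟨lt_of_le_of_ne h0 (Ne.symm ht0), lt_of_le_of_ne h1 ht1⟩
  set m : ℝ := min t (1 - t) with hm_def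
  have hm : 0 < m := lt_min htIoo.1 (by linarith [htIoo.2])
  have hmt : m ≤ t := min_le_left _ _
  have hmt' : m ≤ 1 - t := min_le_right _ _
  -- near minimizer at t
  have hε4 : (0:ℝ) < ε/4 := by linarith
  obtain ⟨y, hy, hylt⟩ := exists_lt_of_csInf_lt ⟨Faff Φ t 0, Set.mem_range_self 0⟩
    (show phiInf Φ t < phiInf Φ t + ε/4 by linarith)
  obtain ⟨αs, rfl⟩ := hy
  set L : ℝ := |Φ αs - Φ (-αs)| with hL_def
  have hL0 : 0 ≤ L := abs_nonneg _
  set C : ℝ := (Φ 0 + 1)/(m/2) with hC_def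
  have hC0 : 0 ≤ C := div_nonneg (by linarith [hΦ 0]) (by linarith)
  set δ : ℝ := min (m/2) (min (ε/(4*(L+1))) (ε/(4*(C+1)))) with hδ_def
  have hδ0 : 0 < δ := by
    refine lt_min (by linarith) (lt_min (by positivity) ?_)
    apply div_pos hε
    linarith
  have hδm : δ ≤ m/2 := min_le_left _ _
  have hδL : δ ≤ ε/(4*(L+1)) := le_trans (min_le_right _ _) (min_le_left _ _)
  have hδC : δ ≤ ε/(4*(C+1)) := le_trans (min_le_right _ _) (min_le_right _ _)
  have hδLε : δ * L ≤ ε/4 := by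
    have h1 : δ * (4*(L+1)) ≤ ε := (le_div_iff₀ (by positivity)).mp hδL
    nlinarith
  have hδCε : δ * C ≤ ε/4 := by
    have h1 : δ * (4*(C+1)) ≤ ε := (le_div_iff₀ (by linarith)).mp hδC
    nlinarith
  obtain ⟨k, hk⟩ := exists_nat_one_div_lt hε4
  obtain ⟨q, hq1, hq2⟩ := exists_rat_btwn (show t - δ < t by linarith)
  have hq01 : (q:ℝ) ∈ Set.Icc (0:ℝ) 1 := by
    constructor
    · have : t - δ ≥ m - m/2 := by linarith
      linarith
    · linarith [htIoo.2]
  have hqm : m/2 ≤ (q:ℝ) := by linarith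
  have hqm' : m/2 ≤ 1 - (q:ℝ) := by linarith
  -- step 1 : phiInf q close to phiInf t
  have step1 : phiInf Φ (q:ℝ) ≤ phiInf Φ t + ε/2 := by
    have h1 : phiInf Φ (q:ℝ) ≤ Faff Φ (q:ℝ) αs := phiInf_le hΦ hq01 αs
    have h2 : Faff Φ (q:ℝ) αs = Faff Φ t αs + ((q:ℝ) - t) * (Φ αs - Φ (-αs)) :=
      Faff_shift Φ (q:ℝ) t αs
    have h3 : ((q:ℝ) - t) * (Φ αs - Φ (-αs)) ≤ δ * L := by
      calc ((q:ℝ) - t) * (Φ αs - Φ (-αs)) ≤ |((q:ℝ) - t) * (Φ αs - Φ (-αs))| := le_abs_self _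
        _ = |(q:ℝ) - t| * L := by rw [abs_mul]
        _ ≤ δ * L := by
            apply mul_le_mul_of_nonneg_right _ hL0
            rw [abs_le]; constructor <;> linarith
    linarith
  set α : ℝ := pick (q, k) with hα_def
  have h4 : Faff Φ (q:ℝ) α < phiInf Φ (q:ℝ) + 1/(k+1) := hpick (q, k) hq01
  have h4' : Faff Φ (q:ℝ) α < phiInf Φ t + ε/2 + ε/4 := by
    have : (1:ℝ)/(k+1) < ε/4 := by push_cast at hk ⊢; linarith
    linarith
  -- slope bound at α
  have hFq1 : Faff Φ (q:ℝ) α ≤ Φ 0 + 1 := by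
    have h5 : phiInf Φ (q:ℝ) ≤ Φ 0 := phiInf_le_top hΦ hq01
    have h6 : (1:ℝ)/(k+1) ≤ 1 := by
      rw [div_le_one (by positivity)]; push_cast; linarith
    linarith
  have hΦα : Φ α ≤ C := by
    have h7 : (q:ℝ) * Φ α ≤ Φ 0 + 1 := by
      have := mul_nonneg (by linarith [hq01.2] : (0:ℝ) ≤ 1 - (q:ℝ)) (hΦ (-α))
      unfold Faff at hFq1; linarith
    rw [hC_def, le_div_iff₀ (by positivity)]
    calc Φ α * (m/2) ≤ Φ α * (q:ℝ) := mul_le_mul_of_nonneg_left hqm (hΦ α)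
      _ = (q:ℝ) * Φ α := mul_comm _ _
      _ ≤ Φ 0 + 1 := h7
  have hΦα' : Φ (-α) ≤ C := by
    have h7 : (1 - (q:ℝ)) * Φ (-α) ≤ Φ 0 + 1 := by
      have := mul_nonneg (by linarith [hq01.1] : (0:ℝ) ≤ (q:ℝ)) (hΦ α)
      unfold Faff at hFq1; linarith
    rw [hC_def, le_div_iff₀ (by positivity)]
    calc Φ (-α) * (m/2) ≤ Φ (-α) * (1 - (q:ℝ)) := mul_le_mul_of_nonneg_left hqm' (hΦ (-α))
      _ = (1 - (q:ℝ)) * Φ (-α) := mul_comm _ _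
      _ ≤ Φ 0 + 1 := h7
  have hslope : |Φ α - Φ (-α)| ≤ C := by
    rw [abs_le]
    constructor
    · linarith [hΦ (-α), hΦ α]
    · linarith [hΦ (-α), hΦ α]
  -- conclude
  obtain ⟨n, hn⟩ := key q k
  refine ⟨n, ?_⟩
  show Faff Φ t (pick (e.symm n)) < phiInf Φ t + ε
  rw [hn, ← hα_def]
  have h8 : Faff Φ t α = Faff Φ (q:ℝ) α + (t - (q:ℝ)) * (Φ α - Φ (-α)) := Faff_shift Φ t (q:ℝ) α
  have h9 : (t - (q:ℝ)) * (Φ α - Φ (-α)) ≤ δ * C := by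
    calc (t - (q:ℝ)) * (Φ α - Φ (-α)) ≤ |(t - (q:ℝ)) * (Φ α - Φ (-α))| := le_abs_self _
      _ = |t - (q:ℝ)| * |Φ α - Φ (-α)| := by rw [abs_mul]
      _ ≤ δ * C := by
          apply mul_le_mul _ hslope (abs_nonneg _) (le_of_lt hδ0)
          rw [abs_le]; constructor <;> linarith
  linarith

lemma integrable_of_bounded {X : Type*} [MeasurableSpace X] (μ : MeasureTheory.Measure X)
    [MeasureTheory.IsFiniteMeasure μ] {f : X → ℝ} (hf : Measurable f) (C : ℝ)
    (hC : ∀ x, |f x| ≤ C) : MeasureTheory.Integrable f μ :=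
  MeasureTheory.Integrable.mono' (MeasureTheory.integrable_const C) hf.aestronglyMeasurable
    (Filter.Eventually.of_forall fun x => by rw [Real.norm_eq_abs]; exact hC x)

end PsiBoundAux


open MeasureTheory Set in
/-- **Excess error Ψ-bound for the family of all measurable functions** (Corollary 1). -/
theorem excess_error_Psi_bound_all_measurable
    {X : Type*} [MeasurableSpace X] [Nonempty X]
    (μ : Measure X) [IsProbabilityMeasure μ]
    (η : X → ℝ) (hηmeas : Measurable η) (hη01 : ∀ x, η x ∈ Icc (0:ℝ) 1)
    (Φ : ℝ → ℝ) (hΦpos : ∀ t, 0 ≤ Φ t)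
    (hInt01 : ∀ g : X → ℝ, Measurable g → Integrable (condRisk loss01 η g) μ)
    (hIntΦ : ∀ g : X → ℝ, Measurable g → Integrable (condRisk (marginLoss Φ) η g) μ)
    (Ψ : ℝ → ℝ) (hΨconv : ConvexOn ℝ (Ici (0:ℝ)) Ψ) (hΨ0 : Ψ 0 = 0)
    (hcond : ∀ x : X,
      Ψ (2 * |η x - 1/2|) ≤
        sInf ((fun g => deltaC (marginLoss Φ) η {g : X → ℝ | Measurable g} g x) ''
          {g : X → ℝ | Measurable g ∧ sgn (g x) * (η x - 1/2) ≤ 0}))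
    (h : X → ℝ) (hh : Measurable h) :
    Ψ (genErr μ loss01 η h - bestErr μ loss01 η {g : X → ℝ | Measurable g})
      ≤ genErr μ (marginLoss Φ) η h - bestErr μ (marginLoss Φ) η {g : X → ℝ | Measurable g} := by
  classical
  set H : Set (X → ℝ) := {g : X → ℝ | Measurable g} with hH_def
  -- basic rewriting of conditional risks
  have hF_eq : ∀ (g : X → ℝ) (x : X),
      condRisk (marginLoss Φ) η g x = PsiBoundAux.Faff Φ (η x) (g x) := by
    intro g x
    simp [condRisk, condRiskT, marginLoss, PsiBoundAux.Faff]
  have h01val : ∀ (g : X → ℝ) (x : X),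
      condRisk loss01 η g x = if 0 ≤ g x then 1 - η x else η x := by
    intro g x
    unfold condRisk condRiskT loss01 sgn
    by_cases hgx : 0 ≤ g x
    · simp only [if_pos hgx]; norm_num
    · simp only [if_neg hgx]; norm_num
  have hFmeas : ∀ α : ℝ, Measurable (fun x => PsiBoundAux.Faff Φ (η x) α) := by
    intro α
    simp only [PsiBoundAux.Faff]
    exact (hηmeas.mul_const _).add ((measurable_const.sub hηmeas).mul_const _)
  -- the pointwise Bayes Φ-risk
  set φη : X → ℝ := fun x => PsiBoundAux.phiInf Φ (η x) with hφη_def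
  have hstarΦ : ∀ x, condRiskStar (marginLoss Φ) η H x = φη x := by
    intro x
    show condRiskStar (marginLoss Φ) η H x = PsiBoundAux.phiInf Φ (η x)
    unfold condRiskStar PsiBoundAux.phiInf
    congr 1
    ext y
    constructor
    · rintro ⟨g, hg, rfl⟩
      exact ⟨g x, (hF_eq g x).symm⟩
    · rintro ⟨α, rfl⟩
      exact ⟨fun _ => α, measurable_const, (hF_eq (fun _ => α) x)⟩
  have hφη_le : ∀ (g : X → ℝ) (x : X), φη x ≤ condRisk (marginLoss Φ) η g x := by
    intro g x
    rw [hF_eq]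
    exact PsiBoundAux.phiInf_le hΦpos (hη01 x) _
  have hφη_nn : ∀ x, 0 ≤ φη x := fun x => PsiBoundAux.phiInf_nonneg hΦpos (hη01 x)
  have hφη_ub : ∀ x, φη x ≤ Φ 0 := fun x => PsiBoundAux.phiInf_le_top hΦpos (hη01 x)
  -- nonnegativity facts
  have hCR01nn : ∀ (g : X → ℝ) (x : X), 0 ≤ condRisk loss01 η g x := by
    intro g x
    rw [h01val]
    rcases hη01 x with ⟨h0, h1⟩
    split_ifs <;> linarith
  have hCRΦnn : ∀ (g : X → ℝ) (x : X), 0 ≤ condRisk (marginLoss Φ) η g x := by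
    intro g x
    rw [hF_eq]
    exact PsiBoundAux.Faff_nonneg hΦpos (hη01 x) _
  have hGE01nn : ∀ g : X → ℝ, 0 ≤ genErr μ loss01 η g :=
    fun g => integral_nonneg (fun x => hCR01nn g x)
  have hGEΦnn : ∀ g : X → ℝ, 0 ≤ genErr μ (marginLoss Φ) η g :=
    fun g => integral_nonneg (fun x => hCRΦnn g x)
  have hbdd01 : BddBelow ((fun g => genErr μ loss01 η g) '' H) := by
    refine ⟨0, ?_⟩; rintro y ⟨g, hg, rfl⟩; exact hGE01nn g
  have hbddΦ : BddBelow ((fun g => genErr μ (marginLoss Φ) η g) '' H) := by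
    refine ⟨0, ?_⟩; rintro y ⟨g, hg, rfl⟩; exact hGEΦnn g
  have hhH : h ∈ H := hh
  have hbest01_le : bestErr μ loss01 η H ≤ genErr μ loss01 η h :=
    csInf_le hbdd01 ⟨h, hhH, rfl⟩
  have hbestΦ_le : bestErr μ (marginLoss Φ) η H ≤ genErr μ (marginLoss Φ) η h :=
    csInf_le hbddΦ ⟨h, hhH, rfl⟩
  -- the 0-1 Bayes risk min(η, 1-η)
  set mn : X → ℝ := fun x => min (η x) (1 - η x) with hmn_def
  have hmn_meas : Measurable mn := hηmeas.min (measurable_const.sub hηmeas)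
  have hmn_nn : ∀ x, 0 ≤ mn x := by
    intro x; rcases hη01 x with ⟨h0, h1⟩
    exact le_min h0 (by linarith)
  have hmn_le : ∀ (g : X → ℝ) (x : X), mn x ≤ condRisk loss01 η g x := by
    intro g x
    rw [h01val]
    split_ifs
    · exact min_le_right _ _
    · exact min_le_left _ _
  have hmn_int : Integrable mn μ := by
    refine PsiBoundAux.integrable_of_bounded μ hmn_meas 1 (fun x => ?_)
    rw [abs_of_nonneg (hmn_nn x)]
    rcases hη01 x with ⟨h0, h1⟩
    exact le_trans (min_le_left _ _) h1
  have hbest01_ge : ∫ x, mn x ∂μ ≤ bestErr μ loss01 η H := by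
    refine le_csInf ⟨genErr μ loss01 η h, ⟨h, hhH, rfl⟩⟩ ?_
    rintro y ⟨g, hg, rfl⟩
    exact integral_mono hmn_int (hInt01 g hg) (fun x => hmn_le g x)
  -- the pointwise excess 0-1 risk
  set Z : X → ℝ := fun x => condRisk loss01 η h x - mn x with hZ_def
  have hZnn : ∀ x, 0 ≤ Z x := fun x => sub_nonneg.2 (hmn_le h x)
  have hZint : Integrable Z μ := (hInt01 h hh).sub hmn_int
  set a : ℝ := ∫ x, Z x ∂μ with ha_def
  have ha_nn : 0 ≤ a := integral_nonneg hZnn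
  have ha_eq : a = genErr μ loss01 η h - ∫ x, mn x ∂μ := by
    rw [ha_def]
    exact integral_sub (hInt01 h hh) hmn_int
  set b : ℝ := genErr μ loss01 η h - bestErr μ loss01 η H with hb_def
  have hb_nn : 0 ≤ b := sub_nonneg.2 hbest01_le
  have hb_le_a : b ≤ a := by rw [ha_eq, hb_def]; linarith [hbest01_ge]
  have hRHS_nn : 0 ≤ genErr μ (marginLoss Φ) η h - bestErr μ (marginLoss Φ) η H :=
    sub_nonneg.2 hbestΦ_le
  -- countable approximation of the Bayes Φ-risk and the selection sequence
  obtain ⟨A, hA⟩ := PsiBoundAux.exists_countable_approx Φ hΦpos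
  set B : ℕ → X → ℝ := fun N => Nat.rec (motive := fun _ => X → ℝ)
      (fun x => PsiBoundAux.Faff Φ (η x) (A 0))
      (fun N BN x => min (BN x) (PsiBoundAux.Faff Φ (η x) (A (N+1)))) N with hB_def
  have hB0 : ∀ x, B 0 x = PsiBoundAux.Faff Φ (η x) (A 0) := fun _ => rfl
  have hBsucc : ∀ N x, B (N+1) x = min (B N x) (PsiBoundAux.Faff Φ (η x) (A (N+1))) :=
    fun _ _ => rfl
  have hBmeas : ∀ N, Measurable (B N) := by
    intro N
    induction N with
    | zero => exact hFmeas (A 0)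
    | succ N ih => exact ih.min (hFmeas (A (N+1)))
  have hBphi : ∀ N x, φη x ≤ B N x := by
    intro N
    induction N with
    | zero => intro x; rw [hB0]; exact (hφη_le (fun _ => A 0) x).trans_eq (hF_eq _ x)
    | succ N ih =>
        intro x; rw [hBsucc]
        refine le_min (ih x) ?_
        exact (hφη_le (fun _ => A (N+1)) x).trans_eq (hF_eq _ x)
  have hBle : ∀ n x, B n x ≤ PsiBoundAux.Faff Φ (η x) (A n) := by
    intro n x
    cases n with
    | zero => exact le_of_eq (hB0 x)
    | succ N => rw [hBsucc]; exact min_le_right _ _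
  have hBanti : ∀ x, Antitone (fun N => B N x) := by
    intro x
    refine antitone_nat_of_succ_le (fun N => ?_)
    rw [hBsucc]; exact min_le_left _ _
  have hBtend : ∀ x, Tendsto (fun N => B N x) atTop (𝓝 (φη x)) := by
    intro x
    rw [Metric.tendsto_atTop]
    intro ε hε
    obtain ⟨n, hn⟩ := hA (η x) (hη01 x) ε hε
    refine ⟨n, fun N hN => ?_⟩
    rw [Real.dist_eq, abs_lt]
    constructor
    · have := hBphi N x; linarith
    · have h1 : B N x ≤ B n x := hBanti x hN
      have h2 := hBle n x
      linarith
  have hBub : ∀ N x, |B N x| ≤ Φ (A 0) + Φ (-(A 0)) := by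
    intro N x
    have hnn : 0 ≤ B N x := le_trans (hφη_nn x) (hBphi N x)
    rw [abs_of_nonneg hnn]
    have h1 : B N x ≤ B 0 x := hBanti x (Nat.zero_le N)
    rw [hB0] at h1
    rcases hη01 x with ⟨h0, h1'⟩
    have h2 : η x * Φ (A 0) ≤ Φ (A 0) := by nlinarith [hΦpos (A 0)]
    have h3 : (1 - η x) * Φ (-(A 0)) ≤ Φ (-(A 0)) := by nlinarith [hΦpos (-(A 0))]
    have h4 : PsiBoundAux.Faff Φ (η x) (A 0) ≤ Φ (A 0) + Φ (-(A 0)) := by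
      unfold PsiBoundAux.Faff; linarith
    linarith
  have hBint : ∀ N, Integrable (B N) μ := fun N =>
    PsiBoundAux.integrable_of_bounded μ (hBmeas N) _ (hBub N)
  have hφη_meas : Measurable φη :=
    measurable_of_tendsto_metrizable hBmeas (tendsto_pi_nhds.2 hBtend)
  have hφη_int : Integrable φη μ := by
    refine PsiBoundAux.integrable_of_bounded μ hφη_meas (Φ 0) (fun x => ?_)
    rw [abs_of_nonneg (hφη_nn x)]
    exact hφη_ub x
  have hIntTend : Tendsto (fun N => ∫ x, B N x ∂μ) atTop (𝓝 (∫ x, φη x ∂μ)) :=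
    tendsto_integral_of_dominated_convergence (fun _ => Φ (A 0) + Φ (-(A 0)))
      (fun N => (hBmeas N).aestronglyMeasurable) (integrable_const _)
      (fun N => Filter.Eventually.of_forall (fun x => by
        rw [Real.norm_eq_abs]; exact hBub N x))
      (Filter.Eventually.of_forall hBtend)
  have hgsel : ∀ N, ∃ g : X → ℝ, Measurable g ∧
      ∀ x, condRisk (marginLoss Φ) η g x = B N x := by
    intro N
    induction N with
    | zero => exact ⟨fun _ => A 0, measurable_const, fun x => (hF_eq _ x).trans (hB0 x).symm⟩
    | succ N ih =>
        obtain ⟨g, hg, hge⟩ := ih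
        refine ⟨fun x => if PsiBoundAux.Faff Φ (η x) (A (N+1)) < B N x then A (N+1) else g x,
          ?_, ?_⟩
        · exact Measurable.ite (measurableSet_lt (hFmeas (A (N+1))) (hBmeas N))
            measurable_const hg
        · intro x
          rw [hF_eq, hBsucc]
          by_cases hc : PsiBoundAux.Faff Φ (η x) (A (N+1)) < B N x
          · rw [if_pos hc, min_eq_right (le_of_lt hc)]
          · rw [if_neg hc, min_eq_left (not_lt.1 hc)]
            rw [← hge x, hF_eq]
  have hbestΦ_le_phi : bestErr μ (marginLoss Φ) η H ≤ ∫ x, φη x ∂μ := by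
    refine ge_of_tendsto hIntTend (Filter.Eventually.of_forall (fun N => ?_))
    obtain ⟨g, hg, hge⟩ := hgsel N
    have h1 : bestErr μ (marginLoss Φ) η H ≤ genErr μ (marginLoss Φ) η g :=
      csInf_le hbddΦ ⟨g, hg, rfl⟩
    have h2 : genErr μ (marginLoss Φ) η g = ∫ x, B N x ∂μ := by
      unfold genErr
      exact integral_congr_ae (Filter.Eventually.of_forall hge)
    linarith
  -- pointwise comparison Ψ(Z x) ≤ excess Φ-risk at x
  have hpoint : ∀ x, Ψ (Z x) ≤ condRisk (marginLoss Φ) η h x - φη x := by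
    intro x
    have hΔnn : 0 ≤ condRisk (marginLoss Φ) η h x - φη x := sub_nonneg.2 (hφη_le h x)
    rcases hη01 x with ⟨hη0, hη1⟩
    by_cases hc : sgn (h x) * (η x - 1/2) ≤ 0
    · have hZx : Z x = 2 * |η x - 1/2| := by
        rw [hZ_def]
        simp only [h01val h x, hmn_def]
        unfold sgn at hc
        by_cases hx0 : 0 ≤ h x
        · rw [if_pos hx0]
          rw [if_pos hx0] at hc
          have hle : η x ≤ 1/2 := by nlinarith [hc]
          rw [min_eq_left (by linarith), abs_of_nonpos (by linarith)]
          ring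
        · rw [if_neg hx0]
          rw [if_neg hx0] at hc
          have hge : 1/2 ≤ η x := by nlinarith [hc]
          rw [min_eq_right (by linarith), abs_of_nonneg (by linarith)]
          ring
      rw [hZx]
      calc Ψ (2 * |η x - 1/2|)
          ≤ sInf ((fun g => deltaC (marginLoss Φ) η H g x) ''
              {g : X → ℝ | Measurable g ∧ sgn (g x) * (η x - 1/2) ≤ 0}) := hcond x
        _ ≤ deltaC (marginLoss Φ) η H h x := by
            refine csInf_le ?_ ⟨h, ⟨hh, hc⟩, rfl⟩
            refine ⟨0, ?_⟩
            rintro y ⟨g, ⟨hg, _⟩, rfl⟩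
            show (0:ℝ) ≤ deltaC (marginLoss Φ) η H g x
            unfold deltaC
            rw [hstarΦ]
            exact sub_nonneg.2 (hφη_le g x)
        _ = condRisk (marginLoss Φ) η h x - φη x := by
            unfold deltaC; rw [hstarΦ]
    · have hZx : Z x = 0 := by
        rw [hZ_def]
        simp only [h01val h x, hmn_def]
        unfold sgn at hc
        by_cases hx0 : 0 ≤ h x
        · rw [if_pos hx0]
          rw [if_pos hx0] at hc
          have : 1/2 < η x := by nlinarith [not_le.1 hc]
          rw [min_eq_right (by linarith)]
          ring
        · rw [if_neg hx0]
          rw [if_neg hx0] at hc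
          have : η x < 1/2 := by nlinarith [not_le.1 hc]
          rw [min_eq_left (by linarith)]
          ring
      rw [hZx, hΨ0]
      exact hΔnn
  -- conclusion
  rcases eq_or_lt_of_le hb_nn with hb0 | hbpos
  · rw [← hb0, hΨ0]
    exact hRHS_nn
  · have hapos : 0 < a := lt_of_lt_of_le hbpos hb_le_a
    have hconvh : Ψ b ≤ (b/a) * Ψ a := by
      have hba1 : b/a ≤ 1 := (div_le_one hapos).2 hb_le_a
      have hba0 : 0 ≤ b/a := div_nonneg hb_nn ha_nn
      have := hΨconv.2 (self_mem_Ici) (ha_nn : a ∈ Ici (0:ℝ))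
        (by linarith : 0 ≤ 1 - b/a) hba0 (by ring)
      rw [smul_eq_mul, smul_eq_mul, smul_eq_mul, smul_eq_mul, mul_zero, zero_add,
        div_mul_cancel₀ _ (ne_of_gt hapos), hΨ0, mul_zero, zero_add] at this
      exact this
    rcases le_or_gt (Ψ a) 0 with hΨa | hΨa
    · have : (b/a) * Ψ a ≤ 0 :=
        mul_nonpos_of_nonneg_of_nonpos (div_nonneg hb_nn ha_nn) hΨa
      linarith
    · have hΨb_le : Ψ b ≤ Ψ a := by
        have hba1 : b/a ≤ 1 := (div_le_one hapos).2 hb_le_a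
        nlinarith
      -- supporting line at a
      set S : Set ℝ := (fun s => (Ψ a - Ψ s) / (a - s)) '' (Set.Ico 0 a) with hS_def
      have hSne : S.Nonempty := ⟨_, ⟨0, ⟨le_refl 0, hapos⟩, rfl⟩⟩
      have hSbdd : BddAbove S := by
        refine ⟨(Ψ (a+1) - Ψ a) / ((a+1) - a), ?_⟩
        rintro y ⟨s, hs, rfl⟩
        exact hΨconv.slope_mono_adjacent (mem_Ici.mpr hs.1)
          (mem_Ici.mpr (by linarith)) hs.2 (by linarith)
      set c : ℝ := sSup S with hc_def
      have hsup : ∀ t, 0 ≤ t → Ψ a + c * (t - a) ≤ Ψ t := by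
        intro t ht
        rcases lt_trichotomy t a with hlt | heq | hgt
        · have hc_ge : (Ψ a - Ψ t)/(a - t) ≤ c := le_csSup hSbdd ⟨t, ⟨ht, hlt⟩, rfl⟩
          have hat : 0 < a - t := by linarith
          rw [div_le_iff₀ hat] at hc_ge
          have hring : c * (t - a) = -(c * (a - t)) := by ring
          linarith
        · subst heq; simp
        · have hc_le : c ≤ (Ψ t - Ψ a)/(t - a) := by
            refine csSup_le hSne ?_
            rintro y ⟨s, hs, rfl⟩
            exact hΨconv.slope_mono_adjacent (mem_Ici.mpr hs.1)
              (mem_Ici.mpr (by linarith)) hs.2 hgt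
          have hta : 0 < t - a := by linarith
          rw [le_div_iff₀ hta] at hc_le
          linarith
      have hptwise : ∀ x, Ψ a + c * (Z x - a) ≤ condRisk (marginLoss Φ) η h x - φη x :=
        fun x => le_trans (hsup (Z x) (hZnn x)) (hpoint x)
      have hLHSint : Integrable (fun x => Ψ a + c * (Z x - a)) μ := by
        have : (fun x => Ψ a + c * (Z x - a)) = fun x => (Ψ a - c * a) + c * Z x := by
          funext x; ring
        rw [this]
        exact (integrable_const _).add (hZint.const_mul c)
      have hRHSint : Integrable (fun x => condRisk (marginLoss Φ) η h x - φη x) μ :=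
        (hIntΦ h hh).sub hφη_int
      have hintineq := integral_mono hLHSint hRHSint hptwise
      have hLHSval : ∫ x, (Ψ a + c * (Z x - a)) ∂μ = Ψ a := by
        have heq : (fun x => Ψ a + c * (Z x - a)) = fun x => (Ψ a - c * a) + c * Z x := by
          funext x; ring
        rw [heq, integral_add (integrable_const _) (hZint.const_mul c),
          integral_const, MeasureTheory.integral_const_mul, ← ha_def]
        simp [measure_univ]
      have hRHSval : ∫ x, (condRisk (marginLoss Φ) η h x - φη x) ∂μ
          = genErr μ (marginLoss Φ) η h - ∫ x, φη x ∂μ := by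
        unfold genErr
        exact integral_sub (hIntΦ h hh) hφη_int
      rw [hLHSval, hRHSval] at hintineq
      have : Ψ a ≤ genErr μ (marginLoss Φ) η h - bestErr μ (marginLoss Φ) η H := by
        linarith [hbestΦ_le_phi]
      linarith
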